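/- The decision version of MinTree is NP-hard: given a finite graph G = (V,E) with integer edge weights w : E → ℤ (possibly negative), a root r ∈ V, and a bound k, deciding whether there exists a subtree of G containing r with total edge weight at most k is NP-hard, via reduction from the Steiner tree problem. -/
import Mathlib


variable {V : Type} [Fintype V] [DecidableEq V]

/-- Vertices incident to at least one edge of `R`. -/
def incVerts (R : Finset (Sym2 V)) : Finset V :=
  Finset.univ.filter (fun v => ∃ e ∈ R, v ∈ e)

/-- Reachability in the undirected graph with edge set `R`. -/
def ReachE (R : Finset (Sym2 V)) (u v : V) : Prop :=
  Relation.ReflTransGen (fun a b => s(a, b) ∈ R) u v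

/-- `R` is (the edge set of) a tree containing the vertex `r`: every vertex touched by
`R` is connected to `r`, and the number of edges is one less than the number of
vertices (the touched ones together with `r`). -/
def IsRTree (R : Finset (Sym2 V)) (r : V) : Prop :=
  (∀ v ∈ incVerts R, ReachE R r v) ∧ R.card + 1 = (insert r (incVerts R)).card

namespace Stmt7Aux

variable {V : Type} [Fintype V] [DecidableEq V]

noncomputable abbrev ι : Sym2 V → Sym2 (V ⊕ V) := Sym2.map Sum.inl
noncomputable abbrev pend (t : V) : Sym2 (V ⊕ V) := s(Sum.inl t, Sum.inr t)

set_option linter.unusedSectionVars false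

lemma iota_inj : Function.Injective (ι (V := V)) := Sym2.map.injective Sum.inl_injective

lemma pend_inj : Function.Injective (pend (V := V)) := by
  intro a b h
  simpa [pend, Sym2.eq_iff] using h

lemma pi_iota (e : Sym2 V) : Sym2.map (Sum.elim id id) (ι e) = e := by
  induction e using Sym2.ind with
  | _ a b => simp [ι]

lemma iota_ne_pend (e : Sym2 V) (t : V) : ι e ≠ pend t := by
  induction e using Sym2.ind with
  | _ a b => simp [ι, pend, Sym2.eq_iff]

lemma mem_incVerts {R : Finset (Sym2 V)} {v : V} : v ∈ incVerts R ↔ ∃ e ∈ R, v ∈ e := by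
  simp [incVerts]

lemma incVerts_union (R : Finset (Sym2 V)) (T : Finset V) :
    incVerts (R.image ι ∪ T.image pend)
      = (incVerts R ∪ T).image Sum.inl ∪ T.image Sum.inr := by
  ext v
  cases v with
  | inl x =>
    simp [mem_incVerts, pend, ι, Sym2.mem_map]
    aesop
  | inr x =>
    simp [mem_incVerts, pend, ι, Sym2.mem_map]
    aesop

lemma reach_proj {R : Finset (Sym2 V)} {T : Finset V}
    {u v : V ⊕ V} (h : ReachE (R.image ι ∪ T.image pend) u v) :
    ReachE R (Sum.elim id id u) (Sum.elim id id v) := by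
  induction h with
  | refl => exact Relation.ReflTransGen.refl
  | tail h1 h2 ih =>
    refine ih.trans ?_
    rcases Finset.mem_union.1 h2 with h | h
    · obtain ⟨e0, he0, heq⟩ := Finset.mem_image.1 h
      induction e0 using Sym2.ind with
      | _ p q =>
        rw [show ι s(p,q) = s(Sum.inl p, Sum.inl q) from rfl, Sym2.eq_iff] at heq
        rcases heq with ⟨hb, hc⟩ | ⟨hb, hc⟩ <;> subst hb <;> subst hc
        · exact Relation.ReflTransGen.single (by simpa using he0)
        · exact Relation.ReflTransGen.single (by simpa [Sym2.eq_swap] using he0)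
    · obtain ⟨t, ht, heq⟩ := Finset.mem_image.1 h
      rw [show pend t = s(Sum.inl t, Sum.inr t) from rfl, Sym2.eq_iff] at heq
      rcases heq with ⟨hb, hc⟩ | ⟨hb, hc⟩ <;> subst hb <;> subst hc <;>
        exact Relation.ReflTransGen.refl

lemma reach_lift {R : Finset (Sym2 V)} {R' : Finset (Sym2 (V ⊕ V))}
    (hsub : R.image ι ⊆ R') {u v : V} (h : ReachE R u v) :
    ReachE R' (Sum.inl u) (Sum.inl v) := by
  induction h with
  | refl => exact Relation.ReflTransGen.refl
  | tail h1 h2 ih => exact ih.tail (hsub (Finset.mem_image_of_mem ι h2))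

lemma reach_mem_or_eq {R : Finset (Sym2 V)} {u v : V} (h : ReachE R u v) :
    u = v ∨ v ∈ incVerts R := by
  cases h with
  | refl => exact Or.inl rfl
  | tail h1 h2 => exact Or.inr (mem_incVerts.2 ⟨_, h2, Sym2.mem_mk_right _ _⟩)

lemma disj_image_pend (R : Finset (Sym2 V)) (T : Finset V) :
    Disjoint (R.image ι) (T.image pend) := by
  rw [Finset.disjoint_left]
  rintro e he he'
  obtain ⟨e0, _, rfl⟩ := Finset.mem_image.1 he
  obtain ⟨t, _, heq⟩ := Finset.mem_image.1 he'
  exact iota_ne_pend e0 t heq.symm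

lemma card_union' (R : Finset (Sym2 V)) (T : Finset V) :
    (R.image ι ∪ T.image pend).card = R.card + T.card := by
  rw [Finset.card_union_of_disjoint (disj_image_pend R T),
    Finset.card_image_of_injective _ iota_inj, Finset.card_image_of_injective _ pend_inj]

lemma card_insert_incVerts (R : Finset (Sym2 V)) (T : Finset V) (t₀ : V) (ht₀ : t₀ ∈ T) :
    (insert (Sum.inr t₀ : V ⊕ V) (incVerts (R.image ι ∪ T.image pend))).card
      = (incVerts R ∪ T).card + T.card := by
  rw [incVerts_union,
    Finset.insert_eq_self.2 (Finset.mem_union_right _ (Finset.mem_image_of_mem _ ht₀)),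
    Finset.card_union_of_disjoint, Finset.card_image_of_injective _ Sum.inl_injective,
    Finset.card_image_of_injective _ Sum.inr_injective]
  rw [Finset.disjoint_left]
  rintro v hv hv'
  obtain ⟨a, _, rfl⟩ := Finset.mem_image.1 hv
  obtain ⟨b, _, h⟩ := Finset.mem_image.1 hv'
  cases h

end Stmt7Aux

open Stmt7Aux in
/-- NP-hardness of the decision version of MinTree via reduction from the
Steiner tree problem (the heart of NP-hardness: a correct many-one reduction). Given a
Steiner instance (`G`, integer weights `w ≥ 0`, terminals `T` with `t₀ ∈ T`, bound
`k < M` where `M = 1 + ∑ |w|`), build `G'` by attaching to each terminal `t` a pendant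
vertex via an edge of weight `−M`, rooted at the pendant vertex `r = inr t₀`. Then
`G` has a Steiner tree for `T` of weight `≤ k` iff `G'` has a subtree containing `r`
of weight `≤ k − M·|T|`. -/
theorem stmt7 {V : Type} [Fintype V] [DecidableEq V]
    (G : Finset (Sym2 V)) (w : Sym2 V → ℤ) (hw : ∀ e ∈ G, 0 ≤ w e)
    (T : Finset V) (t₀ : V) (ht₀ : t₀ ∈ T)
    (M : ℤ) (hM : M = 1 + ∑ e ∈ G, |w e|) (k : ℤ) (hk : k < M)
    (G' : Finset (Sym2 (V ⊕ V)))
    (hG' : G' = G.image (Sym2.map Sum.inl) ∪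
      T.image (fun t => s(Sum.inl t, Sum.inr t)))
    (w' : Sym2 (V ⊕ V) → ℤ)
    (hw' : ∀ e, w' e = if ∃ t ∈ T, e = s(Sum.inl t, Sum.inr t) then -M
      else w (Sym2.map (Sum.elim id id) e)) :
    (∃ R ⊆ G, IsRTree R t₀ ∧ T ⊆ insert t₀ (incVerts R) ∧ ∑ e ∈ R, w e ≤ k) ↔
    (∃ R' ⊆ G', IsRTree R' (Sum.inr t₀ : V ⊕ V) ∧
      ∑ e ∈ R', w' e ≤ k - M * T.card) := by
  classical
  subst hG'
  have hM0 : 0 < M := by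
    have h0 : (0:ℤ) ≤ ∑ e ∈ G, |w e| := Finset.sum_nonneg fun e _ => abs_nonneg _
    linarith
  have hwι : ∀ e, w' (ι e) = w e := by
    intro e
    rw [hw' (ι e), if_neg, pi_iota]
    rintro ⟨t, ht, heq⟩
    exact iota_ne_pend e t heq
  have hwpend : ∀ t ∈ T, w' (pend t) = -M := fun t ht => by
    rw [hw' (pend t), if_pos ⟨t, ht, rfl⟩]
  have hsum : ∀ R : Finset (Sym2 V),
      ∑ e ∈ (R.image ι ∪ T.image pend), w' e = (∑ e ∈ R, w e) - M * T.card := by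
    intro R
    rw [Finset.sum_union (disj_image_pend R T),
      Finset.sum_image (fun a _ b _ h => iota_inj h),
      Finset.sum_image (fun a _ b _ h => pend_inj h),
      Finset.sum_congr rfl (fun e _ => hwι e),
      Finset.sum_congr rfl hwpend, Finset.sum_const, nsmul_eq_mul]
    ring
  have hins : ∀ R : Finset (Sym2 V), T ⊆ insert t₀ (incVerts R) →
      insert t₀ (incVerts R) = incVerts R ∪ T := by
    intro R hT
    apply Finset.Subset.antisymm
    · exact Finset.insert_subset (Finset.mem_union_right _ ht₀) Finset.subset_union_left
    · exact Finset.union_subset (Finset.subset_insert _ _) hT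
  have hcardtrans : ∀ R : Finset (Sym2 V), T ⊆ insert t₀ (incVerts R) →
      (((R.image ι ∪ T.image pend).card + 1 =
        (insert (Sum.inr t₀ : V ⊕ V) (incVerts (R.image ι ∪ T.image pend))).card)
      ↔ R.card + 1 = (insert t₀ (incVerts R)).card) := by
    intro R hT
    rw [card_union', card_insert_incVerts R T t₀ ht₀, hins R hT]
    omega
  have hconn : ∀ R : Finset (Sym2 V), T ⊆ insert t₀ (incVerts R) →
      (∀ v ∈ incVerts R, ReachE R t₀ v) →
      ∀ v ∈ incVerts (R.image ι ∪ T.image pend),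
        ReachE (R.image ι ∪ T.image pend) (Sum.inr t₀) v := by
    intro R hT hRconn
    have hpend_mem : ∀ t ∈ T, pend t ∈ R.image ι ∪ T.image pend := fun t ht =>
      Finset.mem_union_right _ (Finset.mem_image_of_mem _ ht)
    have hstep0 : ReachE (R.image ι ∪ T.image pend) (Sum.inr t₀) (Sum.inl t₀) :=
      Relation.ReflTransGen.single (by
        rw [show s(Sum.inr t₀, Sum.inl t₀) = pend t₀ from Sym2.eq_swap]
        exact hpend_mem t₀ ht₀)
    have hreach_inl : ∀ x ∈ insert t₀ (incVerts R),
        ReachE (R.image ι ∪ T.image pend) (Sum.inr t₀) (Sum.inl x) := by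
      intro x hx
      rcases Finset.mem_insert.1 hx with rfl | hx
      · exact hstep0
      · exact hstep0.trans (reach_lift Finset.subset_union_left (hRconn x hx))
    intro v hv
    rw [incVerts_union] at hv
    rcases Finset.mem_union.1 hv with hv | hv
    · obtain ⟨x, hx, rfl⟩ := Finset.mem_image.1 hv
      exact hreach_inl x (by rw [hins R hT]; exact hx)
    · obtain ⟨x, hx, rfl⟩ := Finset.mem_image.1 hv
      exact (hreach_inl x (hT hx)).tail (hpend_mem x hx)
  constructor
  · rintro ⟨R, hRG, ⟨hRconn, hRcard⟩, hT, hsumR⟩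
    refine ⟨R.image ι ∪ T.image pend,
      Finset.union_subset_union (Finset.image_subset_image hRG) le_rfl,
      ⟨hconn R hT hRconn, (hcardtrans R hT).2 hRcard⟩, ?_⟩
    rw [hsum R]
    linarith
  · rintro ⟨R', hR'G', ⟨hconn', hcard'⟩, hsum'⟩
    set P := R' ∩ T.image pend with hP
    have hPsub : P ⊆ T.image pend := Finset.inter_subset_right
    have hsumP : ∑ e ∈ P, w' e = -M * P.card := by
      have hall : ∀ e ∈ P, w' e = -M := by
        intro e he
        obtain ⟨t, ht, rfl⟩ := Finset.mem_image.1 (hPsub he)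
        exact hwpend t ht
      rw [Finset.sum_congr rfl hall, Finset.sum_const, nsmul_eq_mul]
      ring
    have hdiff : (0:ℤ) ≤ ∑ e ∈ R' \ P, w' e := by
      refine Finset.sum_nonneg fun e he => ?_
      obtain ⟨he1, he2⟩ := Finset.mem_sdiff.1 he
      rcases Finset.mem_union.1 (hR'G' he1) with h | h
      · obtain ⟨e0, he0, rfl⟩ := Finset.mem_image.1 h
        rw [hwι e0]
        exact hw e0 he0
      · exact absurd (Finset.mem_inter.2 ⟨he1, h⟩) he2
    have hsplit : (∑ e ∈ R' \ P, w' e) + ∑ e ∈ P, w' e = ∑ e ∈ R', w' e :=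
      Finset.sum_sdiff Finset.inter_subset_left
    have hPcard_le : P.card ≤ T.card :=
      (Finset.card_le_card hPsub).trans Finset.card_image_le
    have hMP : M * ((T.card : ℤ) - 1) < M * P.card := by linarith
    have hge : (T.card : ℤ) - 1 < P.card := lt_of_mul_lt_mul_left hMP hM0.le
    have hgeN : T.card ≤ P.card := by exact_mod_cast by linarith [hge]
    have hPeq : P = T.image pend := Finset.eq_of_subset_of_card_le hPsub (by
      rw [Finset.card_image_of_injective _ pend_inj]; exact hgeN)
    have hpendsub : T.image pend ⊆ R' := hPeq ▸ Finset.inter_subset_left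
    set R := G.filter (fun e => ι e ∈ R') with hRdef
    have hRG : R ⊆ G := Finset.filter_subset _ _
    have hR'eq : R' = R.image ι ∪ T.image pend := by
      apply Finset.Subset.antisymm
      · intro e he
        rcases Finset.mem_union.1 (hR'G' he) with h | h
        · obtain ⟨e0, he0, rfl⟩ := Finset.mem_image.1 h
          exact Finset.mem_union_left _
            (Finset.mem_image_of_mem _ (Finset.mem_filter.2 ⟨he0, he⟩))
        · exact Finset.mem_union_right _ h
      · refine Finset.union_subset ?_ hpendsub
        intro e he
        obtain ⟨e0, he0, rfl⟩ := Finset.mem_image.1 he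
        exact (Finset.mem_filter.1 he0).2
    have hTsub : T ⊆ insert t₀ (incVerts R) := by
      intro t ht
      have hinlt : (Sum.inl t : V ⊕ V) ∈ incVerts R' :=
        mem_incVerts.2 ⟨pend t, hpendsub (Finset.mem_image_of_mem _ ht), by simp [pend]⟩
      have hr := hconn' _ hinlt
      rw [hR'eq] at hr
      have hproj : ReachE R t₀ t := by simpa using reach_proj hr
      rcases reach_mem_or_eq hproj with h | h
      · exact h ▸ Finset.mem_insert_self _ _
      · exact Finset.mem_insert_of_mem h
    have hRconn : ∀ v ∈ incVerts R, ReachE R t₀ v := by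
      intro v hv
      obtain ⟨e, he, hve⟩ := mem_incVerts.1 hv
      have hinlv : (Sum.inl v : V ⊕ V) ∈ incVerts R' :=
        mem_incVerts.2 ⟨ι e, by
          rw [hR'eq]; exact Finset.mem_union_left _ (Finset.mem_image_of_mem _ he),
          Sym2.mem_map.2 ⟨v, hve, rfl⟩⟩
      have hr := hconn' _ hinlv
      rw [hR'eq] at hr
      simpa using reach_proj hr
    refine ⟨R, hRG, ⟨hRconn, (hcardtrans R hTsub).1 (by rwa [← hR'eq])⟩, hTsub, ?_⟩
    rw [hR'eq, hsum R] at hsum'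
    linarith
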